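/- For every n ≥ 2 and every r ∈ {1,…,n−1}, the maximum of ℓ(K_n, α) over all α ∈ Sing_n of rank r equals n + ⌊(r−2)/2⌋ (integer floor), and the maximum of ℓ(K_n, α) over all α ∈ Sing_n equals ⌊3(n−1)/2⌋. -/

import Mathlib

noncomputable section

variable {V : Type*}

/-- The arc `(a→b)`: the map sending `a` to `b` and fixing every other point. -/
def arcMap [DecidableEq V] (a b : V) : V → V := fun x => if x = a then b else x

/-- Evaluate a word of arcs, applying the arcs from left to right. -/
def wordEval [DecidableEq V] (w : List (V × V)) : V → V :=
  fun x => w.foldl (fun y e => arcMap e.1 e.2 y) x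

/-- `α ∈ ⟨D⟩`: `α` is a (nonempty) product of arcs of the digraph `D`. -/
def InGen [DecidableEq V] (D : V → V → Prop) (α : V → V) : Prop :=
  ∃ w : List (V × V), w ≠ [] ∧ (∀ e ∈ w, D e.1 e.2) ∧ wordEval w = α

/-- `ℓ(D, α)`: the minimal length of a word in the arcs of `D` expressing `α`. -/
def arcLen [DecidableEq V] (D : V → V → Prop) (α : V → V) : ℕ :=
  sInf {k | ∃ w : List (V × V), w.length = k ∧ (∀ e ∈ w, D e.1 e.2) ∧ wordEval w = α}

/-- `fix(α)`: the number of fixed points of `α`. -/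
def fixCnt (α : V → V) : ℕ := Set.ncard {x | α x = x}

/-- `rk(α)`: the rank of `α`, i.e. the cardinality of its image. -/
def rnk (α : V → V) : ℕ := Set.ncard (Set.range α)

/-- A set `C` is a cyclic orbit of `α` if it is a weakly connected component of the
functional digraph of `α` (edges `(x, α x)`) which is a directed cycle on at least two
vertices: equivalently, `C` is the forward orbit of a periodic point, has at least two
elements, and is closed under taking preimages. -/
def IsCyclicOrbit (α : V → V) (C : Set V) : Prop :=
  2 ≤ C.ncard ∧ (∃ x ∈ C, (∃ k, 0 < k ∧ α^[k] x = x) ∧ C = {y | ∃ k, α^[k] x = y}) ∧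
    ∀ y : V, α y ∈ C → y ∈ C

/-- `cycl(α)`: the number of cyclic orbits of `α`. -/
def cyclCnt (α : V → V) : ℕ := Set.ncard {C : Set V | IsCyclicOrbit α C}

/-- `D` is connected: any two vertices are joined by a directed path in some direction. -/
def ConnectedDigraph (D : V → V → Prop) : Prop :=
  ∀ u v : V, Relation.ReflTransGen D u v ∨ Relation.ReflTransGen D v u

/-- `D` is closed (equal to its closure): whenever `(b,a)` is an edge lying on a directed
cycle of `D` (i.e. there is a directed path from `a` back to `b`), `(a,b)` is also an edge. -/
def ClosedDigraph (D : V → V → Prop) : Prop :=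
  ∀ a b : V, D b a → Relation.ReflTransGen D a b → D a b

/-- Property (★): if `v0, v1, v2` is a directed path with `d_D(v0,v2) = 2`, then every
out-neighbour of `v1` and of `v2` lies in `{v0, v1, v2}`. -/
def StarCond (D : V → V → Prop) : Prop :=
  ∀ v0 v1 v2 : V, D v0 v1 → D v1 v2 → v0 ≠ v2 → ¬ D v0 v2 →
    ∀ u : V, (D v1 u ∨ D v2 u) → (u = v0 ∨ u = v1 ∨ u = v2)

/-- `C` is a strong component of `D`. -/
def IsSC (D : V → V → Prop) (C : Set V) : Prop :=
  ∃ v : V, C = {u | Relation.ReflTransGen D u v ∧ Relation.ReflTransGen D v u}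

/-- `C1` connects to `C2`: some edge goes from `C1` to `C2`. -/
def ConnectsTo (D : V → V → Prop) (C1 C2 : Set V) : Prop :=
  ∃ v1 ∈ C1, ∃ v2 ∈ C2, D v1 v2

/-- `C1` fully connects to `C2`: all pairs are edges. -/
def FullyConnects (D : V → V → Prop) (C1 C2 : Set V) : Prop :=
  ∀ v1 ∈ C1, ∀ v2 ∈ C2, D v1 v2

/-- A terminal strong component: it connects to no other strong component. -/
def IsTerminalSC (D : V → V → Prop) (C : Set V) : Prop :=
  IsSC D C ∧ ∀ C' : Set V, IsSC D C' → C' ≠ C → ¬ ConnectsTo D C C'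

/-- Property (★★): nonterminal strong components have at most 2 vertices and terminal
strong components have at most 3 vertices. -/
def StarStarCond (D : V → V → Prop) : Prop :=
  ∀ C : Set V, IsSC D C →
    (IsTerminalSC D C → C.ncard ≤ 3) ∧ (¬ IsTerminalSC D C → C.ncard ≤ 2)

/-- The induced subdigraph on `C` is an undirected path `a - b - c` on three vertices. -/
def IsP3 (D : V → V → Prop) (C : Set V) : Prop :=
  ∃ a b c : V, a ≠ b ∧ b ≠ c ∧ a ≠ c ∧ C = {a, b, c} ∧
    ∀ u ∈ C, ∀ w ∈ C,
      (D u w ↔ (u = a ∧ w = b) ∨ (u = b ∧ w = a) ∨ (u = b ∧ w = c) ∨ (u = c ∧ w = b))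

/-- `D` has a subdigraph isomorphic to `H`: an injection mapping edges of `H` to edges of `D`. -/
def HasSubdigraph (D : V → V → Prop) {m : ℕ} (H : Fin m → Fin m → Prop) : Prop :=
  ∃ f : Fin m → V, Function.Injective f ∧ ∀ i j : Fin m, H i j → D (f i) (f j)

/-- `Θ_k`: the directed cycle on `k` vertices. -/
def Theta (k : ℕ) : Fin k → Fin k → Prop := fun i j => (j : ℕ) = ((i : ℕ) + 1) % k

/-- `Γ1` (vertices relabelled from `{1,…,5}` to `{0,…,4}`). -/
def Gamma1 : Fin 5 → Fin 5 → Prop := fun i j =>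
  ((i : ℕ), (j : ℕ)) ∈ [(0,3),(3,0),(1,3),(3,1),(2,3),(3,2),(3,4)]

/-- `Γ2` (vertices relabelled from `{1,…,5}` to `{0,…,4}`). -/
def Gamma2 : Fin 5 → Fin 5 → Prop := fun i j =>
  ((i : ℕ), (j : ℕ)) ∈ [(0,2),(2,0),(1,2),(2,1),(2,3),(3,2),(3,4)]

/-- `Γ3` (vertices relabelled from `{1,…,4}` to `{0,…,3}`). -/
def Gamma3 : Fin 4 → Fin 4 → Prop := fun i j =>
  ((i : ℕ), (j : ℕ)) ∈ [(0,1),(1,2),(2,0),(2,3)]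

/-- `Γ4` (vertices relabelled from `{1,…,5}` to `{0,…,4}`). -/
def Gamma4 : Fin 5 → Fin 5 → Prop := fun i j =>
  ((i : ℕ), (j : ℕ)) ∈ [(0,1),(1,2),(2,3),(3,0),(3,4)]

/-- No subdigraph isomorphic to `Γ1`, `Γ2`, `Γ3`, `Γ4` or `Θ_k` for `k ≥ 5`. -/
def ForbiddenFree (D : V → V → Prop) : Prop :=
  ¬ HasSubdigraph D Gamma1 ∧ ¬ HasSubdigraph D Gamma2 ∧ ¬ HasSubdigraph D Gamma3 ∧
    ¬ HasSubdigraph D Gamma4 ∧ ∀ k : ℕ, 5 ≤ k → ¬ HasSubdigraph D (Theta k)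

/-- `D` is acyclic: it has no directed cycle. -/
def AcyclicRel (D : V → V → Prop) : Prop := ∀ v : V, ¬ Relation.TransGen D v v

/-- `ψ_A(u,w)`: the maximal number of edges of a directed path from `u` to `w` in `A`
(in particular `ψ_A(u,u) = 0`). -/
def psiLongest (A : V → V → Prop) (u w : V) : ℕ :=
  sSup {l | ∃ p : List V, p.Chain' A ∧ p.Nodup ∧
    p.head? = some u ∧ p.getLast? = some w ∧ p.length = l + 1}

/-- `d_D(u,w)`: the minimal number of edges of a directed path from `u` to `w` in `D`. -/
def ddist (D : V → V → Prop) (u w : V) : ℕ :=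
  sInf {l | ∃ p : List V, p.Chain' D ∧ p.head? = some u ∧ p.getLast? = some w ∧
    p.length = l + 1}

/-- A tournament: no loops, and exactly one of `(u,v)`, `(v,u)` is an edge for `u ≠ v`. -/
def IsTournament (D : V → V → Prop) : Prop :=
  (∀ v : V, ¬ D v v) ∧ ∀ u v : V, u ≠ v → (D u v ∨ D v u) ∧ ¬ (D u v ∧ D v u)

/-- A strong (strongly connected) digraph. -/
def IsStrongDigraph (D : V → V → Prop) : Prop :=
  ∀ u v : V, Relation.ReflTransGen D u v
namespace ArcProof

open Finset

set_option linter.unusedSectionVars false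

variable {V : Type*} [Fintype V] [DecidableEq V]

/-- number of moved points -/
def sft (f : V → V) : ℕ := (Finset.univ.filter fun x => f x ≠ x).card

/-- `C` is an isolated cycle of `f`. -/
def IsIC (f : V → V) (C : Finset V) : Prop :=
  C.Nonempty ∧ (∀ x ∈ C, f x ∈ C) ∧ (∀ y, f y ∈ C → y ∈ C) ∧ (∀ x ∈ C, f x ≠ x) ∧
    (∀ x ∈ C, ∀ y ∈ C, ∃ k, f^[k] x = y)

open Classical in
/-- number of isolated cycles -/
def iso (f : V → V) : ℕ := (Finset.univ.filter fun C : Finset V => IsIC f C).card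

lemma iterate_pred {f : V → V} {k : ℕ} (hk : 0 < k) (y : V) :
    f^[k] y = f^[k-1] (f y) := by
  conv_lhs => rw [show k = (k-1)+1 by omega]
  rw [Function.iterate_succ_apply]

lemma iterate_pred' {f : V → V} {k : ℕ} (hk : 0 < k) (y : V) :
    f^[k] y = f (f^[k-1] y) := by
  conv_lhs => rw [show k = (k-1)+1 by omega]
  rw [Function.iterate_succ_apply']

lemma IsIC.iterate_mem {f : V → V} {C : Finset V} (h : IsIC f C) {x : V} (hx : x ∈ C)
    (k : ℕ) : f^[k] x ∈ C := by
  induction k with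
  | zero => exact hx
  | succ k ih => rw [Function.iterate_succ_apply']; exact h.2.1 _ ih

lemma IsIC.periodic {f : V → V} {C : Finset V} (h : IsIC f C) {x : V} (hx : x ∈ C) :
    ∃ k, 0 < k ∧ f^[k] x = x := by
  obtain ⟨l, hl⟩ := h.2.2.2.2 (f x) (h.2.1 x hx) x hx
  exact ⟨l + 1, Nat.succ_pos l, by rwa [Function.iterate_add_apply, Function.iterate_one]⟩

lemma IsIC.injOn {f : V → V} {C : Finset V} (h : IsIC f C) {u v : V} (hu : u ∈ C)
    (hv : v ∈ C) (he : f u = f v) : u = v := by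
  obtain ⟨p, hp0, hp⟩ := h.periodic hu
  obtain ⟨q, hq0, hq⟩ := h.periodic hv
  have hup : f^[p * q] u = u := by
    rw [Function.iterate_mul]
    exact Function.iterate_fixed hp q
  have hvq : f^[p * q] v = v := by
    rw [mul_comm, Function.iterate_mul]
    exact Function.iterate_fixed hq p
  have hpq : 0 < p * q := Nat.mul_pos hp0 hq0
  calc u = f^[p * q] u := hup.symm
    _ = f^[p * q - 1] (f u) := iterate_pred hpq u
    _ = f^[p * q - 1] (f v) := by rw [he]
    _ = f^[p * q] v := (iterate_pred hpq v).symm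
    _ = v := hvq

lemma IsIC.eq_of_inter {f : V → V} {C C' : Finset V} (h : IsIC f C) (h' : IsIC f C')
    {x : V} (hx : x ∈ C) (hx' : x ∈ C') : C = C' := by
  have sub : ∀ {D D' : Finset V}, IsIC f D → IsIC f D' → x ∈ D → x ∈ D' → D ⊆ D' := by
    intro D D' hD hD' hxD hxD' y hy
    obtain ⟨k, hk⟩ := hD.2.2.2.2 x hxD y hy
    exact hk ▸ hD'.iterate_mem hxD' k
  exact le_antisymm (sub h h' hx hx') (sub h' h hx' hx)

lemma IsIC.mem_image {f : V → V} {C : Finset V} (h : IsIC f C) {x : V} (hx : x ∈ C) :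
    x ∈ Finset.univ.image f := by
  obtain ⟨p, hp0, hp⟩ := h.periodic hx
  refine Finset.mem_image.2 ⟨f^[p-1] x, Finset.mem_univ _, ?_⟩
  rw [← iterate_pred' (f := f) hp0, hp]

lemma IsIC.one_lt_card {f : V → V} {C : Finset V} (h : IsIC f C) : 2 ≤ C.card := by
  obtain ⟨x, hx⟩ := h.1
  exact Finset.one_lt_card.2 ⟨f x, h.2.1 x hx, x, hx, h.2.2.2.1 x hx⟩

lemma iso_id : iso (id : V → V) = 0 := by
  classical
  rw [iso, Finset.card_eq_zero]
  rw [Finset.filter_eq_empty_iff]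
  rintro C - ⟨⟨x, hx⟩, -, -, hm, -⟩
  exact hm x hx rfl

lemma sft_id : sft (id : V → V) = 0 := by
  rw [sft, Finset.card_eq_zero, Finset.filter_eq_empty_iff]
  intro x _
  simp

lemma sft_add_fix (f : V → V) :
    sft f + (Finset.univ.filter fun x => f x = x).card = Fintype.card V := by
  classical
  rw [sft, add_comm]
  have := Finset.card_filter_add_card_filter_not (s := (Finset.univ : Finset V))
    (p := fun x => f x = x)
  rw [← Finset.card_univ, ← this]


/-! ### word evaluation -/

lemma wordEval_nil : wordEval ([] : List (V × V)) = id := rfl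

lemma wordEval_cons (e : V × V) (w : List (V × V)) :
    wordEval (e :: w) = wordEval w ∘ arcMap e.1 e.2 := rfl

lemma wordEval_append (w w' : List (V × V)) :
    wordEval (w ++ w') = wordEval w' ∘ wordEval w := by
  funext x
  simp [wordEval, List.foldl_append]

/-! ### the step lemma -/

lemma comp_arc (f : V → V) (a b : V) :
    f ∘ arcMap a b = fun x => if x = a then f b else f x := by
  funext x
  simp only [Function.comp, arcMap]
  split <;> rfl

section Step2

variable {f : V → V} {a b : V} (hab : a ≠ b)

private def f' (f : V → V) (a b : V) : V → V := fun x => if x = a then f b else f x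

lemma f'_eq (f : V → V) (a b : V) : f ∘ arcMap a b = f' f a b := comp_arc f a b

include hab in
lemma IsIC.not_mem_a {C : Finset V} (hC : IsIC (f' f a b) C) : a ∉ C := by
  intro haC
  have hsC : f' f a b a ∈ C := hC.2.1 a haC
  have hsa : f' f a b a ≠ a := hC.2.2.2.1 a haC
  have hbC : b ∈ C := by
    apply hC.2.2.1
    have : f' f a b b = f b := by simp [f', hab.symm]
    rw [this]
    simpa [f'] using hsC
  exact hab (hC.injOn haC hbC (by simp [f', hab.symm]))

include hab in
lemma IsIC.of_step {C : Finset V} (hC : IsIC (f' f a b) C) (hfa : f a ∉ C) :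
    IsIC f C := by
  have hanC : a ∉ C := hC.not_mem_a hab
  have heq : ∀ x ∈ C, f x = f' f a b x := by
    intro x hx
    have : x ≠ a := fun h => hanC (h ▸ hx)
    simp [f', this]
  refine ⟨hC.1, ?_, ?_, ?_, ?_⟩
  · intro x hx; rw [heq x hx]; exact hC.2.1 x hx
  · intro y hy
    rcases eq_or_ne y a with rfl | hya
    · exact absurd hy hfa
    · exact hC.2.2.1 y (by rwa [show f' f a b y = f y by simp [f', hya]])
  · intro x hx; rw [heq x hx]; exact hC.2.2.2.1 x hx
  · intro x hx y hy
    obtain ⟨k, hk⟩ := hC.2.2.2.2 x hx y hy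
    refine ⟨k, ?_⟩
    rw [← hk]
    clear hk
    induction k with
    | zero => rfl
    | succ k ih =>
      rw [Function.iterate_succ_apply', Function.iterate_succ_apply', ih,
        heq _ (hC.iterate_mem hx k)]

open Classical in
include hab in
lemma iso_step : iso (f' f a b) ≤ iso f + 1 := by
  classical
  set S' := Finset.univ.filter fun C : Finset V => IsIC (f' f a b) C with hS'
  set S := Finset.univ.filter fun C : Finset V => IsIC f C with hS
  set T := S'.filter fun C => f a ∈ C with hT
  have hsub : S' ⊆ S ∪ T := by
    intro C hC
    have hC' : IsIC (f' f a b) C := (Finset.mem_filter.1 hC).2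
    by_cases hfa : f a ∈ C
    · exact Finset.mem_union_right _ (Finset.mem_filter.2 ⟨hC, hfa⟩)
    · exact Finset.mem_union_left _ (Finset.mem_filter.2 ⟨Finset.mem_univ _, hC'.of_step hab hfa⟩)
  have hT1 : T.card ≤ 1 := by
    refine Finset.card_le_one.2 fun C hCk C' hC'k => ?_
    obtain ⟨hC, hfaC⟩ := Finset.mem_filter.1 hCk
    obtain ⟨hC', hfaC'⟩ := Finset.mem_filter.1 hC'k
    exact IsIC.eq_of_inter (Finset.mem_filter.1 hC).2 (Finset.mem_filter.1 hC').2 hfaC hfaC'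
  calc iso (f' f a b) = S'.card := by rw [iso]
    _ ≤ (S ∪ T).card := Finset.card_le_card hsub
    _ ≤ S.card + T.card := Finset.card_union_le _ _
    _ ≤ iso f + 1 := by rw [iso, ← hS]; omega

include hab in
lemma iso_step_fixed (hfa : f a = a) : iso (f' f a b) ≤ iso f := by
  classical
  rw [iso, iso]
  apply Finset.card_le_card
  intro C hC
  have hC' : IsIC (f' f a b) C := (Finset.mem_filter.1 hC).2
  refine Finset.mem_filter.2 ⟨Finset.mem_univ _, hC'.of_step hab ?_⟩
  rw [hfa]
  exact hC'.not_mem_a hab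

lemma sft_step_fixed (hfa : f a = a) : sft (f' f a b) ≤ sft f + 1 := by
  rw [sft, sft]
  calc (Finset.univ.filter fun x => f' f a b x ≠ x).card
      ≤ (insert a (Finset.univ.filter fun x => f x ≠ x)).card := by
        apply Finset.card_le_card
        intro x hx
        have hx' := (Finset.mem_filter.1 hx).2
        rcases eq_or_ne x a with rfl | hxa
        · exact Finset.mem_insert_self _ _
        · refine Finset.mem_insert_of_mem (Finset.mem_filter.2 ⟨Finset.mem_univ _, ?_⟩)
          rwa [show f' f a b x = f x by simp [f', hxa]] at hx'
    _ ≤ _ := Finset.card_insert_le _ _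

lemma sft_step_moved (hfa : f a ≠ a) : sft (f' f a b) ≤ sft f := by
  rw [sft, sft]
  apply Finset.card_le_card
  intro x hx
  have hx' := (Finset.mem_filter.1 hx).2
  refine Finset.mem_filter.2 ⟨Finset.mem_univ _, ?_⟩
  rcases eq_or_ne x a with rfl | hxa
  · exact hfa
  · rwa [show f' f a b x = f x by simp [f', hxa]] at hx'

include hab in
lemma phi_step : sft (f ∘ arcMap a b) + iso (f ∘ arcMap a b) ≤ sft f + iso f + 1 := by
  rw [f'_eq]
  by_cases hfa : f a = a
  · have := sft_step_fixed (b := b) hfa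
    have := iso_step_fixed hab hfa
    omega
  · have := sft_step_moved (b := b) hfa
    have := iso_step (f := f) hab
    omega

end Step2

/-- Lower bound: any word of arcs evaluating to `f` has length at least `sft f + iso f`. -/
theorem lower_bound (w : List (V × V)) (hw : ∀ e ∈ w, e.1 ≠ e.2) :
    sft (wordEval w) + iso (wordEval w) ≤ w.length := by
  induction w with
  | nil => rw [wordEval_nil, sft_id, iso_id]; simp
  | cons e w ih =>
    rw [wordEval_cons]
    have h1 : sft (wordEval w ∘ arcMap e.1 e.2) + iso (wordEval w ∘ arcMap e.1 e.2) ≤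
        sft (wordEval w) + iso (wordEval w) + 1 :=
      phi_step (hw e List.mem_cons_self)
    have h2 := ih fun e' he' => hw e' (List.mem_cons_of_mem e he')
    simp only [List.length_cons]
    omega

/-! ### the cycle word -/

section Chunk

variable (c : ℕ → V) (z : V) (m : ℕ)

def midw (k : ℕ) : List (V × V) := (List.range k).reverse.map fun j => (c j, c (j+1))

def chunkW : List (V × V) := (c (m-1), z) :: (midw c (m-1) ++ [(z, c 0)])

lemma midw_succ (k : ℕ) : midw c (k+1) = (c k, c (k+1)) :: midw c k := by
  rw [midw, midw, List.range_succ, List.reverse_append]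
  rfl

lemma midw_length (k : ℕ) : (midw c k).length = k := by simp [midw]

lemma chunkW_length (hm : 1 ≤ m) : (chunkW c z m).length = m + 1 := by
  simp only [chunkW, midw, List.length_cons, List.length_append, List.length_map,
    List.length_reverse, List.length_range, List.length_nil]
  omega

variable {c z m}
variable (hm2 : 2 ≤ m) (hinj : ∀ i < m, ∀ j < m, c i = c j → i = j)
  (hz : ∀ i < m, c i ≠ z)

include hinj in
lemma midw_eval (k : ℕ) (hk : k + 1 ≤ m) :
    (∀ j < k, wordEval (midw c k) (c j) = c (j+1)) ∧
    (∀ y, (∀ j < k, y ≠ c j) → wordEval (midw c k) y = y) := by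
  induction k with
  | zero =>
    constructor
    · intro j hj; omega
    · intro y _; rfl
  | succ k ih =>
    obtain ⟨iha, ihb⟩ := ih (by omega)
    rw [midw_succ, wordEval_cons]
    constructor
    · intro j hj
      rcases eq_or_ne j k with rfl | hjk
      · have harc : arcMap (c j) (c (j+1)) (c j) = c (j+1) := by simp [arcMap]
        simp only [Function.comp_apply, harc]
        apply ihb
        intro j' hj' he
        have := hinj (j+1) (by omega) j' (by omega) he
        omega
      · have hlt : j < k := by omega
        have harc : arcMap (c k) (c (k+1)) (c j) = c j := by
          rw [arcMap]
          have : c j ≠ c k := fun he => hjk (hinj j (by omega) k (by omega) he)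
          simp [this]
        simp only [Function.comp_apply, harc]
        exact iha j hlt
    · intro y hy
      have harc : arcMap (c k) (c (k+1)) y = y := by
        rw [arcMap]; simp [hy k (by omega)]
      simp only [Function.comp_apply, harc]
      exact ihb y fun j hj => hy j (by omega)

include hm2 hinj hz in
lemma chunkW_eval :
    (∀ j, j + 1 < m → wordEval (chunkW c z m) (c j) = c (j+1)) ∧
    wordEval (chunkW c z m) (c (m-1)) = c 0 ∧
    wordEval (chunkW c z m) z = c 0 ∧
    (∀ y, y ≠ z → (∀ j < m, y ≠ c j) → wordEval (chunkW c z m) y = y) := by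
  obtain ⟨ma, mb⟩ := midw_eval hinj (m-1) (by omega)
  have heval : ∀ y, wordEval (chunkW c z m) y =
      arcMap z (c 0) (wordEval (midw c (m-1)) (arcMap (c (m-1)) z y)) := by
    intro y
    rw [chunkW, wordEval_cons, wordEval_append]
    rfl
  refine ⟨?_, ?_, ?_, ?_⟩
  · intro j hj
    rw [heval]
    have h1 : arcMap (c (m-1)) z (c j) = c j := by
      rw [arcMap]
      have : c j ≠ c (m-1) := fun he => by
        have := hinj j (by omega) (m-1) (by omega) he; omega
      simp [this]
    rw [h1, ma j (by omega), arcMap]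
    have : c (j+1) ≠ z := hz (j+1) (by omega)
    simp [this]
  · rw [heval]
    have h1 : arcMap (c (m-1)) z (c (m-1)) = z := by simp [arcMap]
    rw [h1, mb z (fun j hj => (hz j (by omega)).symm), arcMap]
    simp
  · rw [heval]
    have h1 : arcMap (c (m-1)) z z = z := by
      rw [arcMap]; simp [(hz (m-1) (by omega)).symm]
    rw [h1, mb z (fun j hj => (hz j (by omega)).symm), arcMap]
    simp
  · intro y hyz hyc
    rw [heval]
    have h1 : arcMap (c (m-1)) z y = y := by
      rw [arcMap]; simp [hyc (m-1) (by omega)]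
    rw [h1, mb y (fun j hj => hyc j (by omega)), arcMap]
    simp [hyz]

include hm2 hinj hz in
lemma chunkW_valid : ∀ e ∈ chunkW c z m, e.1 ≠ e.2 := by
  intro e he
  rw [chunkW] at he
  rcases List.mem_cons.1 he with rfl | he
  · exact hz (m-1) (by omega)
  rcases List.mem_append.1 he with he | he
  · rw [midw] at he
    obtain ⟨j, hj, rfl⟩ := List.mem_map.1 he
    have hjm : j < m - 1 := by simpa using List.mem_reverse.1 hj |> List.mem_range.1
    intro hee
    have := hinj j (by omega) (j+1) (by omega) hee
    omega
  · rw [List.mem_singleton] at he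
    subst he
    exact (hz 0 (by omega)).symm

end Chunk

/-! ### orbits of periodic points -/

section Orbit

lemma orbit_exists (f : V → V) (x₀ : V) (hper : ∃ k, 0 < k ∧ f^[k] x₀ = x₀)
    (hmov : f x₀ ≠ x₀) :
    ∃ m : ℕ, 2 ≤ m ∧ f^[m] x₀ = x₀ ∧
      (∀ i, i < m → ∀ j, j < m → f^[i] x₀ = f^[j] x₀ → i = j) ∧
      (∀ k, f^[k] x₀ = f^[k % m] x₀) := by
  classical
  set P : Set ℕ := {k | 0 < k ∧ f^[k] x₀ = x₀} with hP
  have hne : P.Nonempty := hper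
  set m := sInf P with hm
  obtain ⟨hm0, hitm⟩ : 0 < m ∧ f^[m] x₀ = x₀ := Nat.sInf_mem hne
  have hm2 : 2 ≤ m := by
    have hne1 : m ≠ 1 := by
      intro h
      rw [h] at hitm
      exact hmov (by simpa using hitm)
    omega
  have hinj : ∀ i, i < m → ∀ j, j < m → f^[i] x₀ = f^[j] x₀ → i = j := by
    have key : ∀ i j, i < j → j < m → f^[i] x₀ ≠ f^[j] x₀ := by
      intro i j hij hjm he
      have h1 : f^[(m - j) + j] x₀ = x₀ := by
        rw [show (m - j) + j = m by omega]; exact hitm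
      have h2 : f^[(m - j) + i] x₀ = x₀ := by
        rw [Function.iterate_add_apply, he, ← Function.iterate_add_apply]
        exact h1
      have hmem : (m - j) + i ∈ P := ⟨by omega, h2⟩
      have := Nat.sInf_le hmem
      omega
    intro i hi j hj he
    rcases lt_trichotomy i j with h | h | h
    · exact absurd he (key i j h hj)
    · exact h
    · exact absurd he.symm (key j i h hi)
  have hmod : ∀ k, f^[k] x₀ = f^[k % m] x₀ := by
    intro k
    conv_lhs => rw [← Nat.div_add_mod k m, Nat.add_comm]
    rw [Function.iterate_add_apply]
    congr 1
    rw [Function.iterate_mul]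
    exact Function.iterate_fixed hitm _
  exact ⟨m, hm2, hitm, hinj, hmod⟩

variable {f : V → V} {x₀ : V} {m : ℕ}
variable (hm2 : 2 ≤ m) (hitm : f^[m] x₀ = x₀)
  (hinj : ∀ i, i < m → ∀ j, j < m → f^[i] x₀ = f^[j] x₀ → i = j)
  (hmod : ∀ k, f^[k] x₀ = f^[k % m] x₀)

/-- The orbit finset. -/
def orbF (f : V → V) (x₀ : V) (m : ℕ) : Finset V := (Finset.range m).image (fun i => f^[i] x₀)

lemma mem_orbF {y : V} : y ∈ orbF f x₀ m ↔ ∃ i, i < m ∧ f^[i] x₀ = y := by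
  simp [orbF, Finset.mem_image]

lemma x₀_mem_orbF (hm0 : 0 < m) : x₀ ∈ orbF f x₀ m :=
  mem_orbF.2 ⟨0, hm0, rfl⟩

include hinj in
lemma orbF_card : (orbF f x₀ m).card = m := by
  rw [orbF, Finset.card_image_of_injOn, Finset.card_range]
  intro i hi j hj he
  exact hinj i (Finset.mem_range.1 hi) j (Finset.mem_range.1 hj) he

include hmod in
lemma orbF_closed {y : V} (hy : y ∈ orbF f x₀ m) (hm0 : 0 < m) : f y ∈ orbF f x₀ m := by
  obtain ⟨i, hi, rfl⟩ := mem_orbF.1 hy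
  rw [← Function.iterate_succ_apply' f i x₀, hmod (i+1)]
  exact mem_orbF.2 ⟨(i+1) % m, Nat.mod_lt _ hm0, rfl⟩

include hm2 hinj hmod in
lemma orbF_moved {y : V} (hy : y ∈ orbF f x₀ m) : f y ≠ y := by
  obtain ⟨i, hi, rfl⟩ := mem_orbF.1 hy
  rw [← Function.iterate_succ_apply' f i x₀, hmod (i+1)]
  intro he
  rcases Nat.lt_or_ge (i+1) m with h | h
  · rw [Nat.mod_eq_of_lt h] at he
    have := hinj (i+1) h i hi he
    omega
  · have hieq : i + 1 = m := by omega
    rw [hieq, Nat.mod_self] at he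
    have := hinj 0 (by omega) i hi he
    omega

include hitm in
lemma orbF_reach {y y' : V} (hy : y ∈ orbF f x₀ m) (hy' : y' ∈ orbF f x₀ m) :
    ∃ k, f^[k] y = y' := by
  obtain ⟨i, hi, rfl⟩ := mem_orbF.1 hy
  obtain ⟨j, hj, rfl⟩ := mem_orbF.1 hy'
  refine ⟨(m - i) + j, ?_⟩
  rw [← Function.iterate_add_apply, Nat.add_assoc, show m - i + (j + i) = j + m by omega,
    Function.iterate_add_apply, hitm]

include hitm in
lemma orbF_sub_image : orbF f x₀ m ⊆ Finset.univ.image f := by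
  intro y hy
  obtain ⟨i, hi, rfl⟩ := mem_orbF.1 hy
  rcases Nat.eq_zero_or_pos i with rfl | hi0
  · refine Finset.mem_image.2 ⟨f^[m-1] x₀, Finset.mem_univ _, ?_⟩
    rw [← Function.iterate_succ_apply' f (m-1) x₀, Nat.succ_eq_add_one, show m - 1 + 1 = m by omega]
    exact hitm
  · exact Finset.mem_image.2 ⟨f^[i-1] x₀, Finset.mem_univ _, by
      rw [← Function.iterate_succ_apply' f (i-1) x₀, Nat.succ_eq_add_one, show i - 1 + 1 = i by omega]⟩

include hm2 hitm hinj in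
/-- Under the orbit setup, the chunk word evaluates to the rotation map. -/
lemma chunk_rho {z : V} (hz : z ∉ orbF f x₀ m) :
    wordEval (chunkW (fun i => f^[i] x₀) z m) =
      fun y => if y = z then x₀ else if y ∈ orbF f x₀ m then f y else y := by
  have hz' : ∀ i, i < m → f^[i] x₀ ≠ z := by
    intro i hi he
    exact hz (mem_orbF.2 ⟨i, hi, he⟩)
  obtain ⟨ha, hb, hc, hd⟩ := chunkW_eval hm2 hinj hz'
  funext y
  rcases eq_or_ne y z with rfl | hyz
  · simpa using hc
  · by_cases hyC : y ∈ orbF f x₀ m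
    · obtain ⟨i, hi, rfl⟩ := mem_orbF.1 hyC
      have hne : (f^[i] x₀ : V) ≠ z := hz' i hi
      rw [if_neg hne, if_pos hyC]
      rcases Nat.lt_or_ge (i+1) m with h | h
      · rw [ha i h]
        exact Function.iterate_succ_apply' f i x₀
      · have hieq : i = m - 1 := by omega
        subst hieq
        rw [hb]
        have h2 : f (f^[m-1] x₀) = x₀ := by
          rw [← Function.iterate_succ_apply' f (m-1) x₀, Nat.succ_eq_add_one, show m - 1 + 1 = m by omega]
          exact hitm
        rw [h2]
        rfl
    · have hall : ∀ j, j < m → y ≠ f^[j] x₀ := by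
        intro j hj he
        exact hyC (mem_orbF.2 ⟨j, hj, he.symm⟩)
      rw [if_neg hyz, if_neg hyC]
      exact hd y hyz hall

end Orbit

/-! ### helpers for the construction -/

section Helpers

variable {f g h : V → V} {S K : Finset V}

lemma iterate_mem_of_closed (hcl : ∀ x ∈ S, g x ∈ S) {x : V} (hx : x ∈ S) (k : ℕ) :
    g^[k] x ∈ S := by
  induction k with
  | zero => exact hx
  | succ k ih => rw [Function.iterate_succ_apply']; exact hcl _ ih

lemma iterate_congr (hcl : ∀ x ∈ S, g x ∈ S) (heq : ∀ x ∈ S, g x = h x) {x : V}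
    (hx : x ∈ S) (k : ℕ) : g^[k] x = h^[k] x := by
  induction k with
  | zero => rfl
  | succ k ih =>
    rw [Function.iterate_succ_apply' g, Function.iterate_succ_apply' h, ← ih,
      heq _ (iterate_mem_of_closed hcl hx k)]

lemma IsIC.transfer (hK : IsIC g K) (heq : ∀ x ∈ K, g x = h x)
    (hback : ∀ y, h y ∈ K → y ∈ K) : IsIC h K := by
  refine ⟨hK.1, ?_, hback, ?_, ?_⟩
  · intro x hx; rw [← heq x hx]; exact hK.2.1 x hx
  · intro x hx; rw [← heq x hx]; exact hK.2.2.2.1 x hx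
  · intro x hx y hy
    obtain ⟨k, hk⟩ := hK.2.2.2.2 x hx y hy
    exact ⟨k, by rw [← iterate_congr hK.2.1 heq hx k]; exact hk⟩

/-- In an `f`-invariant region on which `f` is injective, any moved point yields a
cycle satisfying all isolated-cycle conditions relative to the region. -/
lemma cycle_in_invariant (hcl : ∀ x ∈ S, f x ∈ S)
    (hinjS : ∀ x ∈ S, ∀ y ∈ S, f x = f y → x = y) {y₀ : V} (hy₀ : y₀ ∈ S)
    (hmov : f y₀ ≠ y₀) :
    ∃ K : Finset V, K ⊆ S ∧ K.Nonempty ∧ (∀ x ∈ K, f x ∈ K) ∧ (∀ x ∈ K, f x ≠ x) ∧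
      (∀ x ∈ K, ∀ y ∈ K, ∃ k, f^[k] x = y) ∧ (∀ u ∈ S, f u ∈ K → u ∈ K) := by
  -- find a period by pigeonhole + cancellation
  have hiter : ∀ k, f^[k] y₀ ∈ S := iterate_mem_of_closed hcl hy₀
  have hcancel : ∀ d i, f^[i] y₀ = f^[i + d] y₀ → y₀ = f^[d] y₀ := by
    intro d i
    induction i with
    | zero => intro hh; simpa using hh
    | succ i ih =>
      intro hh
      apply ih
      apply hinjS _ (hiter i) _ (hiter (i+d))
      rw [← Function.iterate_succ_apply' f i y₀, ← Function.iterate_succ_apply' f (i+d) y₀,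
        Nat.succ_eq_add_one, Nat.succ_eq_add_one, show i + d + 1 = i + 1 + d by omega]
      exact hh
  have hper : ∃ p, 0 < p ∧ f^[p] y₀ = y₀ := by
    have hcard : Fintype.card V < Fintype.card (Fin (Fintype.card V + 1)) := by simp
    obtain ⟨i, j, hij, he⟩ := Fintype.exists_ne_map_eq_of_card_lt
      (fun k : Fin (Fintype.card V + 1) => f^[(k : ℕ)] y₀) hcard
    rcases Nat.lt_or_ge (i : ℕ) (j : ℕ) with hlt | hge
    · exact ⟨(j : ℕ) - i, by omega,
        (hcancel ((j : ℕ) - i) i (by rw [show (i : ℕ) + ((j : ℕ) - i) = j by omega]; exact he)).symm⟩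
    · have hlt : (j : ℕ) < i := by
        rcases Nat.lt_or_ge (j : ℕ) (i : ℕ) with hh | hh
        · exact hh
        · exact absurd (Fin.ext (by omega)) hij
      exact ⟨(i : ℕ) - j, by omega,
        (hcancel ((i : ℕ) - j) j (by rw [show (j : ℕ) + ((i : ℕ) - j) = i by omega]; exact he.symm)).symm⟩
  obtain ⟨m, hm2, hitm, hinj, hmod⟩ := orbit_exists f y₀ hper hmov
  refine ⟨orbF f y₀ m, ?_, ⟨y₀, x₀_mem_orbF (by omega)⟩, fun x hx => orbF_closed hmod hx (by omega),
    fun x hx => orbF_moved hm2 hinj hmod hx, fun x hx y hy => orbF_reach hitm hx hy, ?_⟩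
  · intro x hx
    obtain ⟨i, hi, rfl⟩ := mem_orbF.1 hx
    exact hiter i
  · -- backward closure within S
    intro u hu hfu
    have hsurj : ∃ u' ∈ orbF f y₀ m, f u' = f u := by
      obtain ⟨i, hi, hfi⟩ := mem_orbF.1 hfu
      rcases Nat.eq_zero_or_pos i with rfl | hi0
      · refine ⟨f^[m-1] y₀, mem_orbF.2 ⟨m-1, by omega, rfl⟩, ?_⟩
        rw [← Function.iterate_succ_apply' f (m-1) y₀, Nat.succ_eq_add_one,
          show m - 1 + 1 = m by omega, hitm]
        exact hfi
      · refine ⟨f^[i-1] y₀, mem_orbF.2 ⟨i-1, by omega, rfl⟩, ?_⟩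
        rw [← Function.iterate_succ_apply' f (i-1) y₀, Nat.succ_eq_add_one,
          show i - 1 + 1 = i by omega]
        exact hfi
    obtain ⟨u', hu', he⟩ := hsurj
    have : u' = u := by
      apply hinjS _ ?_ _ hu he
      obtain ⟨i, hi, rfl⟩ := mem_orbF.1 hu'
      exact hiter i
    exact this ▸ hu'

end Helpers

/-! ### the three reduction steps -/

section Cases

variable {f : V → V}

open Classical in
lemma case_iso {C : Finset V} (hC : IsIC f C) {z : V} (hz : ∀ x, f x ≠ z)
    (hninj : ¬ Function.Injective f) :
    ∃ (γ : V → V) (ch : List (V × V)),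
      ¬ Function.Injective γ ∧
      sft γ + C.card = sft f ∧ 1 ≤ C.card ∧
      iso γ + 1 = iso f ∧
      (∀ e ∈ ch, e.1 ≠ e.2) ∧ ch.length = C.card + 1 ∧
      wordEval ch ∘ γ = f := by
  classical
  obtain ⟨x₀, hx₀⟩ := hC.1
  obtain ⟨m, hm2, hitm, hinjm, hmod⟩ := orbit_exists f x₀ (hC.periodic hx₀) (hC.2.2.2.1 x₀ hx₀)
  have hCeq : C = orbF f x₀ m := by
    apply le_antisymm
    · intro y hy
      obtain ⟨k, hk⟩ := hC.2.2.2.2 x₀ hx₀ y hy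
      exact mem_orbF.2 ⟨k % m, Nat.mod_lt _ (by omega), by rw [← hmod k]; exact hk⟩
    · intro y hy
      obtain ⟨i, hi, rfl⟩ := mem_orbF.1 hy
      exact hC.iterate_mem hx₀ i
  have hzC : z ∉ C := fun hzc => by
    obtain ⟨w, -, hw⟩ := Finset.mem_image.1 (hC.mem_image hzc)
    exact hz w hw
  set γ : V → V := fun y => if y ∈ C then y else f y with hγ
  have hγin : ∀ y ∈ C, γ y = y := fun y hy => by simp [hγ, hy]
  have hγout : ∀ y, y ∉ C → γ y = f y := fun y hy => by simp [hγ, hy]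
  have hmovC : C ⊆ Finset.univ.filter fun x => f x ≠ x := fun x hx =>
    Finset.mem_filter.2 ⟨Finset.mem_univ _, hC.2.2.2.1 x hx⟩
  -- sft bookkeeping
  have hsft : sft γ + C.card = sft f := by
    have hfe : (Finset.univ.filter fun x => γ x ≠ x) =
        (Finset.univ.filter fun x => f x ≠ x) \ C := by
      ext x
      simp only [Finset.mem_filter, Finset.mem_sdiff, Finset.mem_univ, true_and]
      constructor
      · intro hx
        have hxC : x ∉ C := fun hxC => hx (hγin x hxC)
        exact ⟨by rwa [hγout x hxC] at hx, hxC⟩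
      · rintro ⟨hfx, hxC⟩
        rwa [hγout x hxC]
    rw [sft, sft, hfe]
    exact Finset.card_sdiff_add_card_eq_card hmovC
  -- iso bookkeeping
  have hIC : ∀ K : Finset V, IsIC γ K ↔ (IsIC f K ∧ K ≠ C) := by
    intro K
    constructor
    · intro hK
      have hdis : ∀ x ∈ K, x ∉ C := by
        intro x hx hxC
        exact hK.2.2.2.1 x hx (hγin x hxC)
      have heq : ∀ x ∈ K, γ x = f x := fun x hx => hγout x (hdis x hx)
      refine ⟨hK.transfer heq ?_, ?_⟩
      · intro y hy
        by_cases hyC : y ∈ C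
        · exact absurd hy (fun hyK => hdis _ hyK (hC.2.1 y hyC))
        · exact hK.2.2.1 y (by rwa [hγout y hyC])
      · obtain ⟨x, hx⟩ := hK.1
        exact fun he => hdis x hx (he ▸ hx)
    · rintro ⟨hK, hne⟩
      have hdis : ∀ x ∈ K, x ∉ C := by
        intro x hx hxC
        exact hne (hK.eq_of_inter hC hx hxC)
      have heq : ∀ x ∈ K, f x = γ x := fun x hx => (hγout x (hdis x hx)).symm
      refine hK.transfer heq ?_
      intro y hy
      by_cases hyC : y ∈ C
      · rw [hγin y hyC] at hy; exact hy
      · exact hK.2.2.1 y (by rwa [hγout y hyC] at hy)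
  have hiso : iso γ + 1 = iso f := by
    have hfe : (Finset.univ.filter fun K : Finset V => IsIC γ K) =
        (Finset.univ.filter fun K : Finset V => IsIC f K).erase C := by
      ext K
      simp only [Finset.mem_filter, Finset.mem_erase, Finset.mem_univ, true_and]
      rw [hIC K]
      tauto
    rw [iso, iso, hfe]
    exact Finset.card_erase_add_one (Finset.mem_filter.2 ⟨Finset.mem_univ _, hC⟩)
  -- γ is not injective
  have hγninj : ¬ Function.Injective γ := by
    obtain ⟨u, v, he, hne⟩ := Function.not_injective_iff.1 hninj
    have huC : u ∉ C := by
      intro hu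
      have hvC : v ∈ C := hC.2.2.1 v (he ▸ hC.2.1 u hu)
      exact hne (hC.injOn hu hvC he)
    have hvC : v ∉ C := by
      intro hv
      have huC' : u ∈ C := hC.2.2.1 u (he.symm ▸ hC.2.1 v hv)
      exact hne (hC.injOn huC' hv he)
    exact Function.not_injective_iff.2 ⟨u, v, by rw [hγout u huC, hγout v hvC]; exact he, hne⟩
  -- the chunk word
  have hz' : ∀ i, i < m → f^[i] x₀ ≠ z := by
    intro i hi he
    exact hzC (he ▸ hCeq ▸ mem_orbF.2 ⟨i, hi, rfl⟩)
  have hzorb : z ∉ orbF f x₀ m := hCeq ▸ hzC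
  refine ⟨γ, chunkW (fun i => f^[i] x₀) z m, hγninj, hsft, by
      have := hC.one_lt_card; omega, hiso, chunkW_valid hm2 hinjm hz', ?_, ?_⟩
  · rw [chunkW_length _ _ _ (by omega), hCeq, orbF_card hinjm]
  · rw [chunk_rho hm2 hitm hinjm hzorb]
    funext y
    simp only [Function.comp_apply]
    by_cases hyC : y ∈ C
    · rw [hγin y hyC]
      have hyz : y ≠ z := fun he => hzC (he ▸ hyC)
      rw [if_neg hyz, if_pos (hCeq ▸ hyC)]
    · rw [hγout y hyC]
      have h1 : f y ≠ z := hz y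
      have h2 : f y ∉ orbF f x₀ m := fun hmem => hyC (hC.2.2.1 y (hCeq ▸ hmem))
      rw [if_neg h1, if_neg h2]

end Cases

section Cases2

variable {f : V → V}

open Classical in
lemma case_tail {z : V} (hz : ∀ x, f x ≠ z)
    (hniso : ∀ C : Finset V, ¬ IsIC f C)
    (hnc : ¬ ((∃ k, 0 < k ∧ f^[k] (f z) = f z) ∧ f (f z) ≠ f z)) :
    (f = arcMap z (f z)) ∨
    ∃ β : V → V, ¬ Function.Injective β ∧ sft β + 1 = sft f ∧ iso β = iso f ∧
      arcMap z (f z) ∘ β = f := by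
  classical
  have hfzz : f z ≠ z := hz z
  set β : V → V := fun y => if y = z then z else f y with hβ
  have hβz : β z = z := by simp [hβ]
  have hβout : ∀ y, y ≠ z → β y = f y := fun y hy => by simp [hβ, hy]
  by_cases hinj2 : ∀ u v : V, u ≠ z → v ≠ z → f u = f v → u = v
  · -- base case : f is an arc
    left
    funext y
    rcases eq_or_ne y z with rfl | hyz
    · simp [arcMap]
    · rw [arcMap, if_neg hyz]
      by_contra hmv
      -- extract a cycle to contradict hniso
      set S : Finset V := Finset.univ.filter (fun u => u ≠ z) with hS
      have hmemS : ∀ u, u ∈ S ↔ u ≠ z := by intro u; simp [hS]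
      have hcl : ∀ x ∈ S, f x ∈ S := fun x _ => (hmemS _).2 (hz x)
      have hinjS : ∀ x ∈ S, ∀ y ∈ S, f x = f y → x = y := fun x hx y hy =>
        hinj2 x y ((hmemS _).1 hx) ((hmemS _).1 hy)
      obtain ⟨K, hKS, hKne, hKcl, hKmov, hKreach, hKback⟩ :=
        cycle_in_invariant hcl hinjS ((hmemS y).2 hyz) hmv
      have hKper : ∀ x ∈ K, ∃ p, 0 < p ∧ f^[p] x = x := by
        intro x hx
        obtain ⟨l, hl⟩ := hKreach (f x) (hKcl x hx) x hx
        exact ⟨l + 1, by omega, by rwa [Function.iterate_add_apply, Function.iterate_one]⟩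
      refine hniso K ⟨hKne, hKcl, ?_, hKmov, hKreach⟩
      intro u hu
      rcases eq_or_ne u z with rfl | huz
      · exact absurd ⟨hKper _ hu, hKmov _ hu⟩ hnc
      · exact hKback u ((hmemS u).2 huz) hu
  · -- recursive case
    right
    push_neg at hinj2
    obtain ⟨u, v, huz, hvz, he, hne⟩ := hinj2
    have hβninj : ¬ Function.Injective β :=
      Function.not_injective_iff.2 ⟨u, v, by rw [hβout u huz, hβout v hvz]; exact he, hne⟩
    have hsft : sft β + 1 = sft f := by
      have hfe : (Finset.univ.filter fun x => β x ≠ x) =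
          (Finset.univ.filter fun x => f x ≠ x).erase z := by
        ext x
        simp only [Finset.mem_filter, Finset.mem_erase, Finset.mem_univ, true_and]
        constructor
        · intro hx
          have hxz : x ≠ z := fun h => hx (h ▸ hβz)
          exact ⟨hxz, by rwa [hβout x hxz] at hx⟩
        · rintro ⟨hxz, hfx⟩
          rwa [hβout x hxz]
      rw [sft, sft, hfe]
      exact Finset.card_erase_add_one (Finset.mem_filter.2 ⟨Finset.mem_univ _, hfzz⟩)
    have hIC : ∀ K : Finset V, IsIC β K ↔ IsIC f K := by
      intro K
      constructor
      · intro hK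
        have hzK : z ∉ K := fun hzK => hK.2.2.2.1 z hzK hβz
        have heq : ∀ x ∈ K, β x = f x := fun x hx =>
          hβout x (fun h => hzK (h ▸ hx))
        refine hK.transfer heq ?_
        intro y hy
        by_cases hyz : y = z
        · -- f z is a cycle point of β restricted to K : contradiction with hnc
          exfalso
          apply hnc
          have hy' : f z ∈ K := by rwa [hyz] at hy
          constructor
          · obtain ⟨p, hp0, hp⟩ := hK.periodic hy'
            refine ⟨p, hp0, ?_⟩
            rwa [iterate_congr hK.2.1 heq hy' p] at hp
          · have h2 := hK.2.2.2.1 (f z) hy'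
            rwa [heq _ hy'] at h2
        · exact hK.2.2.1 y (by rwa [hβout y hyz])
      · intro hK
        have hzK : z ∉ K := by
          intro hzK
          obtain ⟨w, -, hw⟩ := Finset.mem_image.1 (hK.mem_image hzK)
          exact hz w hw
        have heq : ∀ x ∈ K, f x = β x := fun x hx =>
          (hβout x (fun h => hzK (h ▸ hx))).symm
        refine hK.transfer heq ?_
        intro y hy
        by_cases hyz : y = z
        · rw [hyz, hβz] at hy; rwa [hyz]
        · exact hK.2.2.1 y (by rwa [hβout y hyz] at hy)
    have hiso : iso β = iso f := by
      rw [iso, iso]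
      congr 1
      ext K
      simp only [Finset.mem_filter, Finset.mem_univ, true_and]
      exact hIC K
    refine ⟨β, hβninj, hsft, hiso, ?_⟩
    funext y
    simp only [Function.comp_apply]
    rcases eq_or_ne y z with rfl | hyz
    · rw [hβz, arcMap]; simp
    · rw [hβout y hyz, arcMap, if_neg (hz y)]

open Classical in
lemma case_cyc {z : V} (hz : ∀ x, f x ≠ z)
    (hniso : ∀ C : Finset V, ¬ IsIC f C)
    (hper : ∃ k, 0 < k ∧ f^[k] (f z) = f z) (hmv : f (f z) ≠ f z) :
    ∃ ch : List (V × V), (∀ e ∈ ch, e.1 ≠ e.2) ∧ 1 ≤ ch.length ∧ ch.length ≤ sft f ∧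
      ((wordEval ch = f) ∨
        ∃ γ : V → V, ¬ Function.Injective γ ∧ sft γ + ch.length = sft f ∧ iso γ = iso f ∧
          γ ∘ wordEval ch = f) := by
  classical
  obtain ⟨m, hm2, hitm, hinjm, hmod⟩ := orbit_exists f (f z) hper hmv
  set x₀ := f z with hx₀
  set CF := orbF f x₀ m with hCF
  have hzorb : z ∉ CF := by
    intro hmem
    obtain ⟨w, -, hw⟩ := Finset.mem_image.1 (orbF_sub_image hitm hmem)
    exact hz w hw
  have hz' : ∀ i, i < m → f^[i] x₀ ≠ z := fun i hi he =>
    hzorb (he ▸ mem_orbF.2 ⟨i, hi, rfl⟩)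
  have hx₀CF : x₀ ∈ CF := x₀_mem_orbF (by omega)
  set ch := chunkW (fun i => f^[i] x₀) z m with hch
  have hrho := chunk_rho hm2 hitm hinjm hzorb
  set γ : V → V := fun y => if y ∈ CF ∨ y = z then y else f y with hγ
  have hγin : ∀ y, (y ∈ CF ∨ y = z) → γ y = y := fun y hy => by simp [hγ, hy]
  have hγout : ∀ y, y ∉ CF → y ≠ z → γ y = f y := fun y h1 h2 => by
    simp only [hγ]
    rw [if_neg (by tauto)]
  have hcomp : γ ∘ wordEval ch = f := by
    rw [hch, hrho]
    funext y
    simp only [Function.comp_apply]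
    rcases eq_or_ne y z with rfl | hyz
    · rw [if_pos rfl, hγin x₀ (Or.inl hx₀CF)]
    · by_cases hyC : y ∈ CF
      · rw [if_neg hyz, if_pos hyC, hγin (f y) (Or.inl (orbF_closed hmod hyC (by omega)))]
      · rw [if_neg hyz, if_neg hyC, hγout y hyC hyz]
  have hmovR : insert z CF ⊆ Finset.univ.filter fun x => f x ≠ x := by
    intro x hx
    rcases Finset.mem_insert.1 hx with rfl | hx
    · exact Finset.mem_filter.2 ⟨Finset.mem_univ _, hz x⟩
    · exact Finset.mem_filter.2 ⟨Finset.mem_univ _, orbF_moved hm2 hinjm hmod hx⟩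
  have hcardR : (insert z CF).card = m + 1 := by
    rw [Finset.card_insert_of_notMem hzorb, orbF_card hinjm]
  have hlen : ch.length = m + 1 := chunkW_length _ _ _ (by omega)
  have hsftf : m + 1 ≤ sft f := by
    rw [← hcardR, sft]
    exact Finset.card_le_card hmovR
  refine ⟨ch, chunkW_valid hm2 hinjm hz', by omega, by omega, ?_⟩
  by_cases hγinj : Function.Injective γ
  · -- γ = id, so f is the chunk itself
    left
    have hid : ∀ y, y ∉ CF → y ≠ z → f y = y := by
      intro y₀ hy₀C hy₀z
      by_contra hmv₀
      set S : Finset V := Finset.univ.filter (fun u => u ∉ CF ∧ u ≠ z) with hS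
      have hmemS : ∀ u, u ∈ S ↔ (u ∉ CF ∧ u ≠ z) := by intro u; simp [hS]
      have hcl : ∀ x ∈ S, f x ∈ S := by
        intro x hx
        obtain ⟨h1, h2⟩ := (hmemS x).1 hx
        refine (hmemS _).2 ⟨?_, hz x⟩
        intro hfC
        have : γ x = γ (f x) := by
          rw [hγout x h1 h2, hγin (f x) (Or.inl hfC)]
        exact h1 (hγinj this ▸ hfC)
      have hinjS : ∀ x ∈ S, ∀ y ∈ S, f x = f y → x = y := by
        intro x hx y hy he
        obtain ⟨h1, h2⟩ := (hmemS x).1 hx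
        obtain ⟨h3, h4⟩ := (hmemS y).1 hy
        exact hγinj (by rw [hγout x h1 h2, hγout y h3 h4]; exact he)
      obtain ⟨K, hKS, hKne, hKcl, hKmov, hKreach, hKback⟩ :=
        cycle_in_invariant hcl hinjS ((hmemS y₀).2 ⟨hy₀C, hy₀z⟩) hmv₀
      refine hniso K ⟨hKne, hKcl, ?_, hKmov, hKreach⟩
      intro u hu
      by_cases huS : u ∈ S
      · exact hKback u huS hu
      · exfalso
        have hfuS : f u ∈ S := hKS hu
        obtain ⟨hfu1, hfu2⟩ := (hmemS _).1 hfuS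
        rcases not_and_or.1 ((hmemS u).not.1 huS) with h | h
        · push_neg at h
          exact hfu1 (orbF_closed hmod h (by omega))
        · push_neg at h
          subst h
          exact hfu1 hx₀CF
    have hγid : γ = id := by
      funext y
      by_cases hy : y ∈ CF ∨ y = z
      · rw [hγin y hy]; rfl
      · push_neg at hy
        rw [hγout y hy.1 hy.2, hid y hy.1 hy.2]; rfl
    rw [← hcomp, hγid]
    rfl
  · right
    have hsft : sft γ + ch.length = sft f := by
      have hfe : (Finset.univ.filter fun x => γ x ≠ x) =
          (Finset.univ.filter fun x => f x ≠ x) \ insert z CF := by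
        ext x
        simp only [Finset.mem_filter, Finset.mem_sdiff, Finset.mem_univ, true_and,
          Finset.mem_insert]
        constructor
        · intro hx
          have hxR : ¬ (x ∈ CF ∨ x = z) := fun h => hx (hγin x h)
          push_neg at hxR
          refine ⟨by rwa [hγout x hxR.1 hxR.2] at hx, by tauto⟩
        · rintro ⟨hfx, hxR⟩
          push_neg at hxR
          rwa [hγout x hxR.2 hxR.1]
      rw [sft, sft, hfe, hlen, ← hcardR]
      exact Finset.card_sdiff_add_card_eq_card hmovR
    have hIC : ∀ K : Finset V, IsIC γ K ↔ IsIC f K := by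
      intro K
      constructor
      · intro hK
        have hdis : ∀ x ∈ K, x ∉ CF ∧ x ≠ z := by
          intro x hx
          by_contra hcon
          rw [not_and_or] at hcon
          have : x ∈ CF ∨ x = z := by tauto
          exact hK.2.2.2.1 x hx (hγin x this)
        have heq : ∀ x ∈ K, γ x = f x := fun x hx =>
          hγout x (hdis x hx).1 (hdis x hx).2
        refine hK.transfer heq ?_
        intro y hy
        by_cases hyC : y ∈ CF
        · exact absurd (hdis _ hy).1 (not_not.2 (orbF_closed hmod hyC (by omega)))
        · rcases eq_or_ne y z with rfl | hyz
          · exact absurd (hdis _ hy).1 (not_not.2 hx₀CF)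
          · exact hK.2.2.1 y (by rwa [hγout y hyC hyz])
      · intro hK
        have hzK : z ∉ K := by
          intro hzK
          obtain ⟨w, -, hw⟩ := Finset.mem_image.1 (hK.mem_image hzK)
          exact hz w hw
        have hdis : ∀ x ∈ K, x ∉ CF := by
          intro q hq hqC
          have hCFK : x₀ ∈ K := by
            obtain ⟨k, hk⟩ := orbF_reach hitm hqC hx₀CF
            exact hk ▸ hK.iterate_mem hq k
          exact hzK (hK.2.2.1 z hCFK)
        have heq : ∀ x ∈ K, f x = γ x := fun x hx =>
          (hγout x (hdis x hx) (fun h => hzK (h ▸ hx))).symm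
        refine hK.transfer heq ?_
        intro y hy
        by_cases hyR : y ∈ CF ∨ y = z
        · rw [hγin y hyR] at hy; exact hy
        · push_neg at hyR
          exact hK.2.2.1 y (by rwa [hγout y hyR.1 hyR.2] at hy)
    have hiso : iso γ = iso f := by
      rw [iso, iso]
      congr 1
      ext K
      simp only [Finset.mem_filter, Finset.mem_univ, true_and]
      exact hIC K
    exact ⟨γ, hγinj, hsft, hiso, hcomp⟩

end Cases2

/-! ### main upper bound and the formula -/

theorem upper_bound : ∀ N : ℕ, ∀ f : V → V, sft f ≤ N → ¬ Function.Injective f →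
    ∃ w : List (V × V), w ≠ [] ∧ (∀ e ∈ w, e.1 ≠ e.2) ∧ wordEval w = f ∧
      w.length ≤ sft f + iso f := by
  intro N
  induction N with
  | zero =>
    intro f hN hninj
    exfalso
    apply hninj
    have hid : ∀ x, f x = x := by
      intro x
      by_contra hx
      have : x ∈ Finset.univ.filter fun x => f x ≠ x := Finset.mem_filter.2 ⟨Finset.mem_univ _, hx⟩
      have hpos : 0 < sft f := Finset.card_pos.2 ⟨x, this⟩
      omega
    intro a b hab
    rwa [hid a, hid b] at hab
  | succ N ih =>
    intro f hN hninj
    have hnsurj : ¬ Function.Surjective f := fun hs =>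
      hninj (Finite.injective_iff_surjective.2 hs)
    obtain ⟨z, hz⟩ : ∃ z : V, ∀ x, f x ≠ z := by
      rw [Function.Surjective] at hnsurj
      push_neg at hnsurj
      obtain ⟨z, hz⟩ := hnsurj
      exact ⟨z, fun x hx => hz x hx⟩
    by_cases h1 : ∃ C : Finset V, IsIC f C
    · obtain ⟨C, hC⟩ := h1
      obtain ⟨γ, ch, hγninj, hsft, hcpos, hiso, hval, hlen, hcomp⟩ := case_iso hC hz hninj
      obtain ⟨wγ, hwne, hwval, hweval, hwlen⟩ := ih γ (by omega) hγninj
      refine ⟨wγ ++ ch, by simp [hwne], ?_, ?_, ?_⟩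
      · intro e he
        rcases List.mem_append.1 he with he | he
        · exact hwval e he
        · exact hval e he
      · rw [wordEval_append, hweval, hcomp]
      · rw [List.length_append]
        omega
    · push_neg at h1
      by_cases h2 : (∃ k, 0 < k ∧ f^[k] (f z) = f z) ∧ f (f z) ≠ f z
      · obtain ⟨ch, hval, hlen1, hlen2, hcase⟩ := case_cyc hz h1 h2.1 h2.2
        rcases hcase with heq | ⟨γ, hγninj, hsft, hiso, hcomp⟩
        · exact ⟨ch, List.ne_nil_of_length_pos (by omega), hval, heq, by omega⟩
        · obtain ⟨wγ, hwne, hwval, hweval, hwlen⟩ := ih γ (by omega) hγninj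
          refine ⟨ch ++ wγ, ?_, ?_, ?_, ?_⟩
          · have : 0 < (ch ++ wγ).length := by rw [List.length_append]; omega
            exact List.ne_nil_of_length_pos this
          · intro e he
            rcases List.mem_append.1 he with he | he
            · exact hval e he
            · exact hwval e he
          · rw [wordEval_append, hweval, hcomp]
          · rw [List.length_append]
            omega
      · rcases case_tail hz h1 h2 with heq | ⟨β, hβninj, hsft, hiso, hcomp⟩
        · refine ⟨[(z, f z)], by simp, ?_, ?_, ?_⟩
          · intro e he
            rw [List.mem_singleton] at he
            subst he
            exact (hz z).symm
          · exact (show wordEval [(z, f z)] = arcMap z (f z) from rfl).trans heq.symm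
          · have hzf : z ∈ Finset.univ.filter fun x => f x ≠ x :=
              Finset.mem_filter.2 ⟨Finset.mem_univ _, hz z⟩
            have hpos : 0 < sft f := Finset.card_pos.2 ⟨z, hzf⟩
            simpa using by omega
        · obtain ⟨wβ, hwne, hwval, hweval, hwlen⟩ := ih β (by omega) hβninj
          refine ⟨wβ ++ [(z, f z)], by simp, ?_, ?_, ?_⟩
          · intro e he
            rcases List.mem_append.1 he with he | he
            · exact hwval e he
            · rw [List.mem_singleton] at he
              subst he
              exact (hz z).symm
          · rw [wordEval_append, hweval]
            have : wordEval [(z, f z)] = arcMap z (f z) := rfl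
            rw [this, hcomp]
          · rw [List.length_append]
            simp only [List.length_singleton]
            omega

theorem arcLen_eq (f : V → V) (hninj : ¬ Function.Injective f) :
    arcLen (fun a b : V => a ≠ b) f = sft f + iso f := by
  obtain ⟨w, hwne, hval, heval, hlen⟩ := upper_bound (sft f) f le_rfl hninj
  have hmem : w.length ∈ {k | ∃ w' : List (V × V), w'.length = k ∧
      (∀ e ∈ w', e.1 ≠ e.2) ∧ wordEval w' = f} := ⟨w, rfl, hval, heval⟩
  apply le_antisymm
  · exact le_trans (Nat.sInf_le hmem) hlen
  · obtain ⟨w', hw'len, hw'val, hw'eval⟩ := Nat.sInf_mem (Set.nonempty_of_mem hmem)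
    calc sft f + iso f = sft (wordEval w') + iso (wordEval w') := by rw [hw'eval]
      _ ≤ w'.length := lower_bound w' hw'val
      _ = _ := hw'len

/-! ### counting: fix + 2·iso ≤ rank -/

open Classical in
lemma rank_counting (f : V → V) (hninj : ¬ Function.Injective f) :
    (Finset.univ.filter fun x => f x = x).card + 2 * iso f ≤ (Finset.univ.image f).card ∧
    ((Finset.univ.filter fun x => f x = x).card = 0 →
      2 * iso f + 2 ≤ (Finset.univ.image f).card) := by
  classical
  set F := Finset.univ.filter fun x => f x = x with hF
  set S := Finset.univ.filter fun C : Finset V => IsIC f C with hS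
  have hmemS : ∀ C, C ∈ S ↔ IsIC f C := fun C => by simp [hS]
  have hdisj : (S : Set (Finset V)).PairwiseDisjoint id := by
    intro C hC C' hC' hne
    rw [Finset.mem_coe] at hC hC'
    show Disjoint C C'
    rw [Finset.disjoint_left]
    intro x hx hx'
    exact hne (((hmemS C).1 hC).eq_of_inter ((hmemS C').1 hC') hx hx')
  have hbiU : (S.biUnion id).card = ∑ C ∈ S, C.card := Finset.card_biUnion (by
    intro C hC C' hC' hne
    exact hdisj (by simpa using hC) (by simpa using hC') hne)
  have hsum2 : 2 * S.card ≤ ∑ C ∈ S, C.card := by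
    calc 2 * S.card = ∑ _C ∈ S, 2 := by rw [Finset.sum_const, smul_eq_mul, mul_comm]
      _ ≤ ∑ C ∈ S, C.card := Finset.sum_le_sum fun C hC => ((hmemS C).1 hC).one_lt_card
  have hFdisj : Disjoint F (S.biUnion id) := by
    rw [Finset.disjoint_left]
    intro x hxF hxB
    obtain ⟨C, hC, hxC⟩ := Finset.mem_biUnion.1 hxB
    exact ((hmemS C).1 hC).2.2.2.1 x hxC ((Finset.mem_filter.1 hxF).2)
  have hsubI : F ∪ S.biUnion id ⊆ Finset.univ.image f := by
    intro x hx
    rcases Finset.mem_union.1 hx with hx | hx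
    · exact Finset.mem_image.2 ⟨x, Finset.mem_univ _, (Finset.mem_filter.1 hx).2⟩
    · obtain ⟨C, hC, hxC⟩ := Finset.mem_biUnion.1 hx
      exact ((hmemS C).1 hC).mem_image hxC
  have hmain : F.card + 2 * iso f ≤ (Finset.univ.image f).card := by
    calc F.card + 2 * iso f = F.card + 2 * S.card := by rw [iso, hS]
      _ ≤ F.card + ∑ C ∈ S, C.card := by omega
      _ = F.card + (S.biUnion id).card := by rw [hbiU]
      _ = (F ∪ S.biUnion id).card := (Finset.card_union_of_disjoint hFdisj).symm
      _ ≤ _ := Finset.card_le_card hsubI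
  refine ⟨hmain, ?_⟩
  -- the fixed-point-free case
  intro hF0
  rw [Finset.card_eq_zero] at hF0
  have hfix : ∀ x : V, f x ≠ x := by
    intro x hx
    have hxF : x ∈ F := Finset.mem_filter.2 ⟨Finset.mem_univ _, hx⟩
    rw [hF0] at hxF
    exact absurd hxF (Finset.notMem_empty x)
  obtain ⟨z, hz⟩ : ∃ z : V, ∀ x, f x ≠ z := by
    have hnsurj : ¬ Function.Surjective f := fun hs =>
      hninj (Finite.injective_iff_surjective.2 hs)
    rw [Function.Surjective] at hnsurj
    push_neg at hnsurj
    obtain ⟨z, hz⟩ := hnsurj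
    exact ⟨z, fun x hx => hz x hx⟩
  -- z's trajectory avoids all isolated cycles
  set W := Finset.univ \ S.biUnion id with hW
  have hmemW : ∀ u, u ∈ W ↔ ∀ C ∈ S, u ∉ C := by
    intro u
    rw [hW]
    simp only [Finset.mem_sdiff, Finset.mem_univ, true_and, Finset.mem_biUnion, id]
    push_neg
    constructor
    · intro h C hC; exact h C hC
    · intro h C hC; exact h C hC
  have hWcl : ∀ u ∈ W, f u ∈ W := by
    intro u hu
    rw [hmemW] at hu ⊢
    intro C hC hfC
    exact hu C hC (((hmemS C).1 hC).2.2.1 u hfC)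
  have hzW : z ∈ W := by
    rw [hmemW]
    intro C hC hzC
    obtain ⟨w, -, hw⟩ := Finset.mem_image.1 (((hmemS C).1 hC).mem_image hzC)
    exact hz w hw
  -- find a periodic point in W by pigeonhole
  obtain ⟨p, hpW, hpper⟩ : ∃ p, p ∈ W ∧ ∃ q, 0 < q ∧ f^[q] p = p := by
    have hcard : Fintype.card V < Fintype.card (Fin (Fintype.card V + 1)) := by simp
    obtain ⟨i, j, hij, he⟩ := Fintype.exists_ne_map_eq_of_card_lt
      (fun k : Fin (Fintype.card V + 1) => f^[(k : ℕ)] z) hcard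
    have hWit : ∀ k, f^[k] z ∈ W := iterate_mem_of_closed hWcl hzW
    rcases Nat.lt_or_ge (i : ℕ) (j : ℕ) with hlt | hge
    · refine ⟨f^[(i : ℕ)] z, hWit i, (j : ℕ) - i, by omega, ?_⟩
      rw [← Function.iterate_add_apply, show (j : ℕ) - i + i = j by omega]
      exact he.symm
    · have hlt : (j : ℕ) < i := by
        rcases Nat.lt_or_ge (j : ℕ) (i : ℕ) with hh | hh
        · exact hh
        · exact absurd (Fin.ext (by omega)) hij
      refine ⟨f^[(j : ℕ)] z, hWit j, (i : ℕ) - j, by omega, ?_⟩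
      rw [← Function.iterate_add_apply, show (i : ℕ) - j + j = i by omega]
      exact he
  obtain ⟨m, hm2, hitm, hinjm, hmod⟩ := orbit_exists f p hpper (hfix p)
  set K := orbF f p m with hK
  have hKdisW : ∀ C ∈ S, Disjoint C K := by
    intro C hC
    rw [Finset.disjoint_right]
    intro q hqK hqC
    obtain ⟨k, hk, rfl⟩ := mem_orbF.1 hqK
    have hpC : p ∈ C := by
      have : f^[k * (m - 1)] (f^[k] p) = p := by
        have hmm : (m - 1) + 1 = m := by omega
        rw [← Function.iterate_add_apply, show k * (m-1) + k = k * ((m-1)+1) by ring, hmm,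
          mul_comm k m, Function.iterate_mul]
        exact Function.iterate_fixed hitm k
      rw [← this]
      exact ((hmemS C).1 hC).iterate_mem hqC _
    rw [hmemW] at hpW
    exact hpW C hC hpC
  have hdisjK : Disjoint (S.biUnion id) K := by
    rw [Finset.disjoint_left]
    intro x hx hxK
    obtain ⟨C, hC, hxC⟩ := Finset.mem_biUnion.1 hx
    exact (Finset.disjoint_left.1 (hKdisW C hC)) hxC hxK
  have hsubI2 : S.biUnion id ∪ K ⊆ Finset.univ.image f := by
    intro x hx
    rcases Finset.mem_union.1 hx with hx | hx
    · obtain ⟨C, hC, hxC⟩ := Finset.mem_biUnion.1 hx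
      exact ((hmemS C).1 hC).mem_image hxC
    · exact orbF_sub_image hitm hx
  calc 2 * iso f + 2 ≤ (S.biUnion id).card + K.card := by
        rw [hbiU, hK, orbF_card hinjm]
        have : 2 * S.card ≤ ∑ C ∈ S, C.card := hsum2
        rw [iso, ← hS]
        omega
    _ = (S.biUnion id ∪ K).card := (Finset.card_union_of_disjoint hdisjK).symm
    _ ≤ _ := Finset.card_le_card hsubI2

/-! ### the extremal maps -/

section Extremal

def swv (v : ℕ) : ℕ := if v % 2 = 0 then v + 1 else v - 1

lemma swv_even {v : ℕ} (h : v % 2 = 0) : swv v = v + 1 := by rw [swv, if_pos h]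
lemma swv_odd {v : ℕ} (h : v % 2 = 1) : swv v = v - 1 := by rw [swv, if_neg (by omega)]

lemma swv_lt {v m : ℕ} (h : v < 2*m) : swv v < 2*m := by
  rcases Nat.mod_two_eq_zero_or_one v with hv | hv
  · rw [swv_even hv]; omega
  · rw [swv_odd hv]; omega

lemma swv_ne (v : ℕ) : swv v ≠ v := by
  rcases Nat.mod_two_eq_zero_or_one v with hv | hv
  · rw [swv_even hv]; omega
  · rw [swv_odd hv]; omega

lemma swv_swv (v : ℕ) : swv (swv v) = v := by
  rcases Nat.mod_two_eq_zero_or_one v with hv | hv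
  · rw [swv_even hv, swv_odd (by omega)]; omega
  · rw [swv_odd hv, swv_even (by omega)]; omega

def extMap (n m p : ℕ) (hp : p < n) : Fin n → Fin n := fun x =>
  if h : x.val < 2*m ∧ 2*m ≤ n then ⟨swv x.val, lt_of_lt_of_le (swv_lt h.1) h.2⟩
  else ⟨p, hp⟩

/-- the `i`-th 2-cycle as a finset -/
def pr (n i : ℕ) : Finset (Fin n) :=
  Finset.univ.filter fun x : Fin n => x.val = 2*i ∨ x.val = 2*i+1

lemma mem_pr {n i : ℕ} {x : Fin n} : x ∈ pr n i ↔ (x.val = 2*i ∨ x.val = 2*i+1) := by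
  simp [pr]

variable {n m p : ℕ} {hp : p < n}

lemma extMap_lo (hmn : 2*m ≤ n) {x : Fin n} (hx : x.val < 2*m) :
    (extMap n m p hp x).val = swv x.val := by
  rw [extMap, dif_pos ⟨hx, hmn⟩]

lemma extMap_hi {x : Fin n} (hx : ¬ x.val < 2*m) :
    extMap n m p hp x = ⟨p, hp⟩ := dif_neg (fun h => hx h.1)

lemma extMap_invol (hmn : 2*m ≤ n) {x : Fin n} (hx : x.val < 2*m) :
    extMap n m p hp (extMap n m p hp x) = x := by
  have h1 : (extMap n m p hp x).val = swv x.val := extMap_lo hmn hx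
  have h2 : (extMap n m p hp x).val < 2*m := h1 ▸ swv_lt hx
  apply Fin.ext
  rw [extMap_lo hmn h2, h1, swv_swv]

lemma extMap_iter_mem (hmn : 2*m ≤ n) {x : Fin n} (hx : x.val < 2*m) (k : ℕ) :
    (extMap n m p hp)^[k] x = x ∨ (extMap n m p hp)^[k] x = extMap n m p hp x := by
  induction k with
  | zero => left; rfl
  | succ k ih =>
    rw [Function.iterate_succ_apply']
    rcases ih with h | h
    · right; rw [h]
    · left; rw [h, extMap_invol hmn hx]

lemma pr_isIC (hmn : 2*m ≤ n) {i : ℕ} (hi : i < m) (hpi : p ≠ 2*i ∧ p ≠ 2*i+1) :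
    IsIC (extMap n m p hp) (pr n i) := by
  have h2i : 2*i+1 < 2*m := by omega
  have hval : ∀ x : Fin n, x ∈ pr n i → (extMap n m p hp x).val = swv x.val := by
    intro x hx
    rcases mem_pr.1 hx with h | h <;> exact extMap_lo hmn (by omega)
  have hfwd : ∀ x ∈ pr n i, extMap n m p hp x ∈ pr n i := by
    intro x hx
    rw [mem_pr, hval x hx]
    rcases mem_pr.1 hx with h | h
    · right; rw [h, swv_even (by omega)]
    · left; rw [h, swv_odd (by omega)]; omega
  refine ⟨⟨⟨2*i, by omega⟩, mem_pr.2 (Or.inl rfl)⟩, hfwd, ?_, ?_, ?_⟩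
  · intro y hy
    by_cases hylt : y.val < 2*m
    · have : (extMap n m p hp y).val = swv y.val := extMap_lo hmn hylt
      rw [mem_pr, this] at hy
      rw [mem_pr]
      rcases hy with h | h
      · right
        have := swv_swv y.val
        rw [h, swv_even (by omega)] at this
        omega
      · left
        have := swv_swv y.val
        rw [h, swv_odd (by omega)] at this
        omega
    · rw [extMap_hi hylt, mem_pr] at hy
      simp only at hy
      omega
  · intro x hx
    intro he
    have := congrArg Fin.val he
    rw [hval x hx] at this
    exact swv_ne x.val this
  · intro x hx y hy
    by_cases hxy : x = y
    · exact ⟨0, by rw [hxy]; rfl⟩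
    · refine ⟨1, ?_⟩
      rw [Function.iterate_one]
      apply Fin.ext
      rw [hval x hx]
      rcases mem_pr.1 hx with h1 | h1 <;> rcases mem_pr.1 hy with h2 | h2
      · exact absurd (Fin.ext (by omega : x.val = y.val)) hxy
      · rw [h1, h2, swv_even (by omega)]
      · rw [h1, h2, swv_odd (by omega)]; omega
      · exact absurd (Fin.ext (by omega : x.val = y.val)) hxy

lemma isIC_char (hmn : 2*m ≤ n) {C : Finset (Fin n)} (hC : IsIC (extMap n m p hp) C)
    (hpnC : (⟨p, hp⟩ : Fin n) ∉ C) :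
    ∃ x : Fin n, x ∈ C ∧ x.val < 2*m ∧ C = pr n (x.val / 2) := by
  set α := extMap n m p hp with hα
  have hlt : ∀ y ∈ C, y.val < 2*m := by
    intro y hy
    by_contra hge
    rw [← extMap_hi (hp := hp) hge] at hpnC
    exact hpnC (hC.2.1 y hy)
  obtain ⟨x, hx⟩ := hC.1
  have hxlt : x.val < 2*m := hlt x hx
  refine ⟨x, hx, hxlt, ?_⟩
  have hCeq : C = {x, α x} := by
    apply Finset.Subset.antisymm
    · intro y hy
      obtain ⟨k, hk⟩ := hC.2.2.2.2 x hx y hy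
      rcases extMap_iter_mem (hp := hp) hmn hxlt k with h | h <;>
        rw [hk] at h <;> simp [h, hα]
    · intro y hy
      rcases Finset.mem_insert.1 hy with rfl | hy
      · exact hx
      · rw [Finset.mem_singleton.1 hy]
        exact hC.2.1 x hx
  rw [hCeq]
  ext y
  rw [mem_pr, Finset.mem_insert, Finset.mem_singleton]
  have hαx : (α x).val = swv x.val := extMap_lo hmn hxlt
  constructor
  · rintro (rfl | rfl)
    · rcases Nat.mod_two_eq_zero_or_one y.val with hv | hv <;> omega
    · rw [hαx]
      rcases Nat.mod_two_eq_zero_or_one x.val with hv | hv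
      · rw [swv_even hv]; omega
      · rw [swv_odd hv]; omega
  · intro hy
    have : y.val = x.val ∨ y.val = swv x.val := by
      rcases Nat.mod_two_eq_zero_or_one x.val with hv | hv
      · rw [swv_even hv]; omega
      · rw [swv_odd hv]; omega
    rcases this with h | h
    · left; exact Fin.ext h
    · right; exact Fin.ext (by rw [hαx]; exact h)

lemma pr_inj (hmn : 2*m ≤ n) {i j : ℕ} (hi : i < m) (hj : j < m) (he : pr n i = pr n j) :
    i = j := by
  have h2i : (⟨2*i, by omega⟩ : Fin n) ∈ pr n i := mem_pr.2 (Or.inl rfl)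
  rw [he, mem_pr] at h2i
  simp only at h2i
  omega

end Extremal

section ExtremalProps

variable {n m : ℕ}

lemma card_filter_val_lt {k : ℕ} (hkn : k ≤ n) :
    (Finset.univ.filter fun x : Fin n => x.val < k).card = k := by
  have hmem : ∀ v ∈ Finset.range k, v < n := fun v hv =>
    lt_of_lt_of_le (Finset.mem_range.1 hv) hkn
  have : (Finset.univ.filter fun x : Fin n => x.val < k) =
      (Finset.range k).attachFin hmem := by
    ext a
    rw [Finset.mem_attachFin, Finset.mem_range, Finset.mem_filter]
    simp
  rw [this, Finset.card_attachFin, Finset.card_range]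

open Classical in
lemma odd_props (hn : 2 ≤ n) (hr : 2*m+1 ≤ n-1) (hp : 2*m < n) :
    ¬ Function.Injective (extMap n m (2*m) hp) ∧
    sft (extMap n m (2*m) hp) + 1 = n ∧
    iso (extMap n m (2*m) hp) = m ∧
    (Finset.univ.image (extMap n m (2*m) hp)).card = 2*m+1 := by
  classical
  have hmn : 2*m ≤ n := by omega
  set α := extMap n m (2*m) hp with hα
  have hhi : ∀ x : Fin n, ¬ x.val < 2*m → α x = ⟨2*m, hp⟩ := fun x hx => extMap_hi hx
  refine ⟨?_, ?_, ?_, ?_⟩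
  · refine Function.not_injective_iff.2 ⟨⟨2*m, hp⟩, ⟨2*m+1, by omega⟩, ?_, ?_⟩
    · rw [hhi _ (by simp), hhi _ (by simp)]
    · intro he
      have h2 : (2*m : ℕ) = 2*m+1 := congrArg Fin.val he
      omega
  · have hfix : (Finset.univ.filter fun x : Fin n => α x = x) = {⟨2*m, hp⟩} := by
      ext x
      rw [Finset.mem_filter, Finset.mem_singleton]
      constructor
      · rintro ⟨-, hx⟩
        by_cases hlt : x.val < 2*m
        · exfalso
          have := congrArg Fin.val hx
          rw [extMap_lo hmn hlt] at this
          exact swv_ne x.val this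
        · rw [← hx, hhi x hlt]
      · rintro rfl
        exact ⟨Finset.mem_univ _, hhi _ (by simp)⟩
    have h1 := sft_add_fix α
    rw [hfix, Finset.card_singleton, Fintype.card_fin] at h1
    exact h1
  · have hfe : (Finset.univ.filter fun C : Finset (Fin n) => IsIC α C) =
        (Finset.range m).image (pr n) := by
      ext C
      rw [Finset.mem_filter, Finset.mem_image]
      constructor
      · rintro ⟨-, hC⟩
        have hpnC : (⟨2*m, hp⟩ : Fin n) ∉ C := by
          intro hmem
          exact hC.2.2.2.1 _ hmem (hhi _ (by simp))
        obtain ⟨x, hxC, hxlt, hCeq⟩ := isIC_char hmn hC hpnC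
        exact ⟨x.val / 2, Finset.mem_range.2 (by omega), hCeq.symm⟩
      · rintro ⟨i, hi, rfl⟩
        rw [Finset.mem_range] at hi
        exact ⟨Finset.mem_univ _, pr_isIC hmn hi ⟨by omega, by omega⟩⟩
    rw [iso, hfe, Finset.card_image_of_injOn, Finset.card_range]
    intro i hi j hj he
    exact pr_inj hmn (Finset.mem_range.1 (Finset.mem_coe.1 hi))
      (Finset.mem_range.1 (Finset.mem_coe.1 hj)) he
  · have hfe : Finset.univ.image α = Finset.univ.filter fun x : Fin n => x.val < 2*m+1 := by
      ext y
      rw [Finset.mem_image, Finset.mem_filter]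
      constructor
      · rintro ⟨x, -, rfl⟩
        refine ⟨Finset.mem_univ _, ?_⟩
        by_cases hlt : x.val < 2*m
        · rw [extMap_lo hmn hlt]
          have := swv_lt hlt
          omega
        · rw [hhi x hlt]
          exact (show (2*m:ℕ) < 2*m+1 by omega)
      · rintro ⟨-, hy⟩
        by_cases hlt : y.val < 2*m
        · refine ⟨⟨swv y.val, by have := swv_lt hlt; omega⟩, Finset.mem_univ _, ?_⟩
          apply Fin.ext
          rw [extMap_lo hmn (by simpa using swv_lt hlt), swv_swv]
        · refine ⟨⟨2*m, hp⟩, Finset.mem_univ _, ?_⟩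
          rw [hhi _ (by simp)]
          exact Fin.ext (by simp; omega)
    rw [hfe, card_filter_val_lt (by omega)]

open Classical in
lemma even_props (hn : 2 ≤ n) (hm1 : 1 ≤ m) (hr : 2*m ≤ n-1) (hp : 0 < n) :
    ¬ Function.Injective (extMap n m 0 hp) ∧
    sft (extMap n m 0 hp) = n ∧
    iso (extMap n m 0 hp) = m - 1 ∧
    (Finset.univ.image (extMap n m 0 hp)).card = 2*m := by
  classical
  have hmn : 2*m ≤ n := by omega
  set α := extMap n m 0 hp with hα
  have hhi : ∀ x : Fin n, ¬ x.val < 2*m → α x = ⟨0, hp⟩ := fun x hx => extMap_hi hx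
  have hone : α ⟨1, by omega⟩ = ⟨0, hp⟩ := by
    apply Fin.ext
    rw [extMap_lo hmn (by simp; omega)]
    simp [swv_odd]
  refine ⟨?_, ?_, ?_, ?_⟩
  · refine Function.not_injective_iff.2 ⟨⟨1, by omega⟩, ⟨2*m, by omega⟩, ?_, ?_⟩
    · rw [hone, hhi _ (by simp)]
    · intro he
      have h2 : (1 : ℕ) = 2*m := congrArg Fin.val he
      omega
  · have hfix : (Finset.univ.filter fun x : Fin n => α x = x) = ∅ := by
      rw [Finset.filter_eq_empty_iff]
      intro x _
      by_cases hlt : x.val < 2*m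
      · intro hx
        have := congrArg Fin.val hx
        rw [extMap_lo hmn hlt] at this
        exact swv_ne x.val this
      · intro hx
        have := congrArg Fin.val hx
        rw [hhi x hlt] at hx
        have := congrArg Fin.val hx
        simp at this
        omega
    have h1 := sft_add_fix α
    rw [hfix, Finset.card_empty, Fintype.card_fin] at h1
    omega
  · have hfe : (Finset.univ.filter fun C : Finset (Fin n) => IsIC α C) =
        (Finset.Ico 1 m).image (pr n) := by
      ext C
      rw [Finset.mem_filter, Finset.mem_image]
      constructor
      · rintro ⟨-, hC⟩
        have hpnC : (⟨0, hp⟩ : Fin n) ∉ C := by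
          intro h0
          have htC : (⟨2*m, by omega⟩ : Fin n) ∈ C := by
            apply hC.2.2.1
            rw [hhi _ (by simp)]
            exact h0
          obtain ⟨k, hk⟩ := hC.2.2.2.2 _ h0 _ htC
          rcases extMap_iter_mem (hp := hp) hmn
            (show (⟨0, hp⟩ : Fin n).val < 2*m from (by omega : (0:ℕ) < 2*m)) k
            with h | h <;> rw [hk] at h
          · have h2 : (2*m : ℕ) = 0 := congrArg Fin.val h
            omega
          · have h2 : (2*m : ℕ) = swv ((⟨0, hp⟩ : Fin n).val) := by
              have h3 := congrArg Fin.val h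
              rwa [extMap_lo hmn (show (⟨0, hp⟩ : Fin n).val < 2*m from
                (by omega : (0:ℕ) < 2*m))] at h3
            rw [show ((⟨0, hp⟩ : Fin n).val) = 0 from rfl, swv_even (by omega)] at h2
            omega
        obtain ⟨x, hxC, hxlt, hCeq⟩ := isIC_char hmn hC hpnC
        have hx0 : x.val ≠ 0 := by
          intro h0
          exact hpnC (by rwa [show (⟨0, hp⟩ : Fin n) = x from (Fin.ext h0.symm)])
        have hx1 : x.val ≠ 1 := by
          intro h1
          apply hpnC
          have : α x = ⟨0, hp⟩ := by
            rw [show x = (⟨1, by omega⟩ : Fin n) from Fin.ext h1]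
            exact hone
          rw [← this]
          exact hC.2.1 x hxC
        exact ⟨x.val / 2, Finset.mem_Ico.2 ⟨by omega, by omega⟩, hCeq.symm⟩
      · rintro ⟨i, hi, rfl⟩
        rw [Finset.mem_Ico] at hi
        exact ⟨Finset.mem_univ _, pr_isIC hmn hi.2 ⟨by omega, by omega⟩⟩
    rw [iso, hfe, Finset.card_image_of_injOn, Nat.card_Ico]
    intro i hi j hj he
    exact pr_inj hmn (Finset.mem_Ico.1 (Finset.mem_coe.1 hi)).2
      (Finset.mem_Ico.1 (Finset.mem_coe.1 hj)).2 he
  · have hfe : Finset.univ.image α = Finset.univ.filter fun x : Fin n => x.val < 2*m := by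
      ext y
      rw [Finset.mem_image, Finset.mem_filter]
      constructor
      · rintro ⟨x, -, rfl⟩
        refine ⟨Finset.mem_univ _, ?_⟩
        by_cases hlt : x.val < 2*m
        · rw [extMap_lo hmn hlt]
          exact swv_lt hlt
        · rw [hhi x hlt]
          simp
          omega
      · rintro ⟨-, hy⟩
        refine ⟨⟨swv y.val, by have := swv_lt hy; omega⟩, Finset.mem_univ _, ?_⟩
        apply Fin.ext
        rw [extMap_lo hmn (by simpa using swv_lt hy), swv_swv]
    rw [hfe, card_filter_val_lt (by omega)]

lemma exists_extremal (hn : 2 ≤ n) {r : ℕ} (hr1 : 1 ≤ r) (hr2 : r ≤ n - 1) :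
    ∃ α : Fin n → Fin n, ¬ Function.Injective α ∧ (Finset.univ.image α).card = r ∧
      sft α + iso α = n - 1 + r / 2 := by
  by_cases hpar : r % 2 = 1
  · set m := r / 2 with hm
    have hreq : r = 2*m + 1 := by omega
    have hp : 2*m < n := by omega
    obtain ⟨h1, h2, h3, h4⟩ := odd_props hn (by omega) hp
    exact ⟨extMap n m (2*m) hp, h1, by omega, by omega⟩
  · set m := r / 2 with hm
    have hreq : r = 2*m := by omega
    have hm1 : 1 ≤ m := by omega
    have hp : 0 < n := by omega
    obtain ⟨h1, h2, h3, h4⟩ := even_props hn hm1 (by omega) hp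
    exact ⟨extMap n m 0 hp, h1, by omega, by omega⟩

end ExtremalProps

lemma rnk_eq_card_image (α : V → V) : rnk α = (Finset.univ.image α).card := by
  rw [rnk, ← Set.ncard_coe_finset]
  congr 1
  rw [Finset.coe_image, Finset.coe_univ, Set.image_univ]

/-- the key bridge: arcLen of a non-bijective map equals `sft + iso`. -/
lemma arcLen_eq_of_not_bijective {n : ℕ} {α : Fin n → Fin n} (h : ¬ Function.Bijective α) :
    arcLen (fun a b : Fin n => a ≠ b) α = sft α + iso α := by
  have hninj : ¬ Function.Injective α := fun hi => h (Finite.injective_iff_bijective.1 hi)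
  exact arcLen_eq α hninj

end ArcProof

open ArcProof

/-- for `n ≥ 2` and `1 ≤ r ≤ n−1`, the maximum of `ℓ(K_n, α)` over
non-bijective `α` of rank `r` is `n + ⌊(r−2)/2⌋` (note `n + ⌊(r−2)/2⌋ = n − 1 + ⌊r/2⌋`,
an identity valid for all `r ≥ 0`, used here to stay in `ℕ`), and the maximum over all
non-bijective `α` is `⌊3(n−1)/2⌋`. -/
theorem stmt1 (n : ℕ) (hn : 2 ≤ n) (r : ℕ) (hr1 : 1 ≤ r) (hr2 : r ≤ n - 1) :
    IsGreatest {k | ∃ α : Fin n → Fin n, ¬ Function.Bijective α ∧ rnk α = r ∧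
        arcLen (fun a b : Fin n => a ≠ b) α = k} (n - 1 + r / 2) ∧
    IsGreatest {k | ∃ α : Fin n → Fin n, ¬ Function.Bijective α ∧
        arcLen (fun a b : Fin n => a ≠ b) α = k} (3 * (n - 1) / 2) := by
  have hub : ∀ α : Fin n → Fin n, ¬ Function.Bijective α →
      arcLen (fun a b : Fin n => a ≠ b) α ≤
        n - 1 + (Finset.univ.image α).card / 2 := by
    intro α hbij
    have hninj : ¬ Function.Injective α := fun hi => hbij (Finite.injective_iff_bijective.1 hi)
    rw [arcLen_eq α hninj]
    obtain ⟨h1, h2⟩ := rank_counting α hninj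
    have h3 := sft_add_fix α
    rw [Fintype.card_fin] at h3
    by_cases hfz : (Finset.univ.filter fun x : Fin n => α x = x).card = 0
    · have := h2 hfz
      omega
    · omega
  have hrle : ∀ α : Fin n → Fin n, ¬ Function.Bijective α →
      (Finset.univ.image α).card ≤ n - 1 := by
    intro α hbij
    have hninj : ¬ Function.Injective α := fun hi => hbij (Finite.injective_iff_bijective.1 hi)
    have hne : Finset.univ.image α ≠ Finset.univ := by
      intro he
      apply hninj
      apply Finite.injective_iff_surjective.2
      intro y
      have : y ∈ Finset.univ.image α := by rw [he]; exact Finset.mem_univ y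
      obtain ⟨x, -, hx⟩ := Finset.mem_image.1 this
      exact ⟨x, hx⟩
    have hss : Finset.univ.image α ⊂ Finset.univ := Finset.ssubset_univ_iff.2 hne
    have := Finset.card_lt_card hss
    rw [Finset.card_univ, Fintype.card_fin] at this
    omega
  constructor
  · constructor
    · obtain ⟨α, hninj, hcard, hsum⟩ := exists_extremal hn hr1 hr2
      refine ⟨α, fun hb => hninj hb.1, ?_, ?_⟩
      · rw [rnk_eq_card_image, hcard]
      · rw [arcLen_eq α hninj, hsum]
    · rintro k ⟨α, hbij, hrnk, rfl⟩
      have h := hub α hbij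
      rw [rnk_eq_card_image] at hrnk
      rw [hrnk] at h
      exact h
  · constructor
    · obtain ⟨α, hninj, hcard, hsum⟩ := exists_extremal hn (r := n - 1) (by omega) le_rfl
      refine ⟨α, fun hb => hninj hb.1, ?_⟩
      rw [arcLen_eq α hninj, hsum]
      omega
    · rintro k ⟨α, hbij, rfl⟩
      have h := hub α hbij
      have h2 := hrle α hbij
      have : n - 1 + (Finset.univ.image α).card / 2 ≤ 3 * (n-1) / 2 := by omega
      omega
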